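/- Suppose η_w A Aᵀ - η_a W Wᵀ = δ I_h, and either δ ≤ 0, or δ > 0 and h ≥ c. Then AᵀA = (1/η_w)((δ/2) I_c + √(η_aη_w βᵀβ + (δ²/4) I_c)), with β = WᵀA and √ the principal matrix square root. -/

import Mathlib

open Matrix

section

open scoped ComplexOrder

/-- The positive semidefinite square root of a positive semidefinite matrix
(as defined in Mathlib of December 2024; removed since). -/
noncomputable def Matrix.PosSemidef.sqrt {n 𝕜 : Type*} [Fintype n] [RCLike 𝕜] [DecidableEq n]
    {A : Matrix n n 𝕜} (hA : A.PosSemidef) : Matrix n n 𝕜 :=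
  hA.1.eigenvectorUnitary.1 * diagonal ((↑) ∘ (√·) ∘ hA.1.eigenvalues) *
    (star hA.1.eigenvectorUnitary : Matrix n n 𝕜)

end

section
open scoped MatrixOrder
private lemma sqrt_eq_CFC' {n : ℕ} {M : Matrix (Fin n) (Fin n) ℝ} (hM : M.PosSemidef) :
    hM.sqrt = CFC.sqrt M := by
  have h0 : (0 : Matrix (Fin n) (Fin n) ℝ) ≤ M := hM.nonneg
  rw [CFC.sqrt_eq_real_sqrt M h0, cfcₙ_eq_cfc (hf0 := Real.sqrt_zero), hM.1.cfc_eq]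
  rw [IsHermitian.cfc, Unitary.conjStarAlgAut_apply]
  rfl
private lemma sqrt_mul_self' {n : ℕ} {M : Matrix (Fin n) (Fin n) ℝ} (hM : M.PosSemidef) :
    hM.sqrt * hM.sqrt = M := by
  rw [sqrt_eq_CFC' hM, ← pow_two, CFC.sq_sqrt M hM.nonneg]
private lemma posSemidef_sqrt' {n : ℕ} {M : Matrix (Fin n) (Fin n) ℝ} (hM : M.PosSemidef) :
    hM.sqrt.PosSemidef := by
  rw [sqrt_eq_CFC' hM]; exact (CFC.sqrt_nonneg M).posSemidef
private lemma eq_sqrt_of_sq_eq' {n : ℕ} {S M : Matrix (Fin n) (Fin n) ℝ} (hS : S.PosSemidef)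
    (hM : M.PosSemidef) (h : S ^ 2 = M) : S = hM.sqrt := by
  rw [sqrt_eq_CFC' hM, ← h, CFC.sqrt_sq S hS.nonneg]
end

private lemma psd_smul' {n : ℕ} {M : Matrix (Fin n) (Fin n) ℝ} (hM : M.PosSemidef) {a : ℝ}
    (ha : 0 ≤ a) : (a • M).PosSemidef := by
  refine Matrix.PosSemidef.of_dotProduct_mulVec_nonneg ?_ (fun x => ?_)
  · show (a • M)ᴴ = a • M
    rw [conjTranspose_smul, hM.1]; simp
  · simp only [smul_mulVec, dotProduct_smul, smul_eq_mul]
    exact mul_nonneg ha (hM.dotProduct_mulVec_nonneg x)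

private lemma posdef_smul' {n : ℕ} {M : Matrix (Fin n) (Fin n) ℝ} (hM : M.PosDef) {a : ℝ}
    (ha : 0 < a) : (a • M).PosDef := by
  refine Matrix.PosDef.of_dotProduct_mulVec_pos ?_ (fun x hx => ?_)
  · show (a • M)ᴴ = a • M
    rw [conjTranspose_smul, hM.1]; simp
  · simp only [smul_mulVec, dotProduct_smul, smul_eq_mul]
    exact mul_pos ha (hM.dotProduct_mulVec_pos hx)

/-- Under the isotropic balance condition, AᵀA = (1/η_w)((δ/2)I + √(η_aη_w βᵀβ + (δ²/4)I)). -/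
theorem AtA_in_terms_of_beta (hdim d c : ℕ) (ηa ηw δ : ℝ) (hηa : 0 < ηa) (hηw : 0 < ηw)
    (A : Matrix (Fin hdim) (Fin c) ℝ) (W : Matrix (Fin hdim) (Fin d) ℝ)
    (β : Matrix (Fin d) (Fin c) ℝ) (hβ : β = Wᵀ * A)
    (hbal : ηw • (A * Aᵀ) - ηa • (W * Wᵀ) = δ • (1 : Matrix (Fin hdim) (Fin hdim) ℝ))
    (hcase : δ ≤ 0 ∨ (0 < δ ∧ c ≤ hdim))
    (hpsd : ((ηa*ηw) • (βᵀ * β) + (δ^2/4) • (1 : Matrix (Fin c) (Fin c) ℝ)).PosSemidef) :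
    Aᵀ * A = (1/ηw) • ((δ/2) • (1 : Matrix (Fin c) (Fin c) ℝ) + hpsd.sqrt) := by
  have hAtA : (Aᵀ * A).PosSemidef := by simpa using posSemidef_conjTranspose_mul_self A
  set S : Matrix (Fin c) (Fin c) ℝ := ηw • (Aᵀ * A) - (δ/2) • 1 with hSdef
  -- key identity: ηw (AᵀA)² - ηa βᵀβ = δ AᵀA
  have key : ηw • ((Aᵀ * A) * (Aᵀ * A)) - ηa • (βᵀ * β) = δ • (Aᵀ * A) := by
    have h := congrArg (fun M => Aᵀ * M * A) hbal
    simp only [Matrix.sub_mul, Matrix.mul_sub, Matrix.mul_smul, Matrix.smul_mul,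
      Matrix.mul_one, Matrix.one_mul] at h
    rw [hβ, transpose_mul, transpose_transpose]
    calc ηw • ((Aᵀ * A) * (Aᵀ * A)) - ηa • ((Aᵀ * W) * (Wᵀ * A))
        = ηw • (Aᵀ * (A * Aᵀ) * A) - ηa • (Aᵀ * (W * Wᵀ) * A) := by
          simp only [Matrix.mul_assoc]
      _ = δ • (Aᵀ * A) := h
  -- S squared is the matrix under the square root
  have hSsq : S ^ 2 = (ηa*ηw) • (βᵀ * β) + (δ^2/4) • (1 : Matrix (Fin c) (Fin c) ℝ) := by
    have expand : S ^ 2 = (ηw*ηw) • ((Aᵀ * A) * (Aᵀ * A)) - (ηw*δ) • (Aᵀ * A)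
        + (δ/2*(δ/2)) • (1 : Matrix (Fin c) (Fin c) ℝ) := by
      rw [pow_two, hSdef]
      simp only [Matrix.sub_mul, Matrix.mul_sub, Matrix.smul_mul, Matrix.mul_smul,
        Matrix.mul_one, Matrix.one_mul, smul_smul]
      module
    have h2 : (ηw*ηw) • ((Aᵀ * A) * (Aᵀ * A)) = (ηw*ηa) • (βᵀ * β) + (ηw*δ) • (Aᵀ * A) := by
      have := congrArg (fun M => ηw • M) key
      simp only [smul_sub, smul_smul] at this
      linear_combination (norm := module) this
    rw [expand, h2]
    have : ηw * ηa = ηa * ηw := mul_comm _ _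
    rw [this]
    have : δ/2*(δ/2) = δ^2/4 := by ring
    rw [this]
    abel
  -- S is positive semidefinite
  have hSpsd : S.PosSemidef := by
    rcases hcase with hδ | ⟨hδ, hcd⟩
    · have : S = ηw • (Aᵀ * A) + (-(δ/2)) • 1 := by
        rw [hSdef]; module
      rw [this]
      exact (psd_smul' hAtA hηw.le).add (psd_smul' Matrix.PosSemidef.one (by linarith))
    · -- δ > 0 and c ≤ hdim
      have hWWt : (W * Wᵀ).PosSemidef := by simpa using posSemidef_self_mul_conjTranspose W
      have hB : (A * Aᵀ).PosSemidef := by simpa using posSemidef_self_mul_conjTranspose A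
      have hbal' : ηw • (A * Aᵀ) = δ • 1 + ηa • (W * Wᵀ) := by
        linear_combination (norm := module) hbal
      have hbal'' : ηw • (A * Aᵀ) - δ • 1 = ηa • (W * Wᵀ) := by
        linear_combination (norm := module) hbal
      -- A * Aᵀ is positive definite
      have hBpd : (A * Aᵀ).PosDef := by
        have h1 : (ηw • (A * Aᵀ)).PosDef := by
          rw [hbal']
          exact (posdef_smul' Matrix.PosDef.one hδ).add_posSemidef (psd_smul' hWWt hηa.le)
        have h2 := posdef_smul' h1 (show (0:ℝ) < 1/ηw by positivity)
        rw [smul_smul, one_div, inv_mul_cancel₀ hηw.ne', one_smul] at h2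
        exact h2
      -- Aᵀ.mulVec is injective, so hdim ≤ c, hence hdim = c
      have hBinj : Function.Injective ((A * Aᵀ).mulVec) :=
        mulVec_injective_iff_isUnit.mpr hBpd.isUnit
      have hinj : Function.Injective (Aᵀ.mulVec) := by
        intro v w hvw
        apply hBinj
        rw [← Matrix.mulVec_mulVec, ← Matrix.mulVec_mulVec, hvw]
      have hle : hdim ≤ c := by
        have hinj' : Function.Injective (Aᵀ.mulVecLin) := by
          exact hinj
        have := LinearMap.finrank_le_finrank_of_injective hinj'
        simpa using this
      have hc : hdim = c := le_antisymm hle hcd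
      subst hc
      -- now A is square, so Aᵀ.mulVec is surjective
      have hsurj : Function.Surjective (Aᵀ.mulVec) :=
        mulVec_surjective_iff_isUnit.mpr (mulVec_injective_iff_isUnit.mp hinj)
      -- T := ηw AᵀA - δ I is PSD since A T Aᵀ = √B (ηa WWᵀ) √B is PSD
      have hRR : hB.sqrt * hB.sqrt = A * Aᵀ := sqrt_mul_self' hB
      have hconj : A * (ηw • (Aᵀ * A) - δ • 1) * Aᵀ
          = hB.sqrt * (ηa • (W * Wᵀ)) * hB.sqrt := by
        rw [← hbal'']
        have hRBR : hB.sqrt * (A * Aᵀ) * hB.sqrt = (A * Aᵀ) * (A * Aᵀ) := by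
          have gen : ∀ R : Matrix (Fin hdim) (Fin hdim) ℝ, R * R = A * Aᵀ →
              R * (A * Aᵀ) * R = (A * Aᵀ) * (A * Aᵀ) := by
            intro R h
            rw [← h]; simp only [Matrix.mul_assoc]
          exact gen _ hRR
        simp only [Matrix.mul_sub, Matrix.sub_mul, Matrix.mul_smul, Matrix.smul_mul,
          Matrix.mul_one, Matrix.one_mul]
        rw [hRBR, hRR]
        simp only [Matrix.mul_assoc]
      have hpsd2 : (A * (ηw • (Aᵀ * A) - δ • 1) * Aᵀ).PosSemidef := by
        rw [hconj]
        have h3 := (psd_smul' hWWt hηa.le).mul_mul_conjTranspose_same hB.sqrt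
        have hRh : (hB.sqrt)ᴴ = hB.sqrt := (posSemidef_sqrt' hB).1
        rwa [hRh] at h3
      have hT : (ηw • (Aᵀ * A) - δ • 1).PosSemidef := by
        refine Matrix.PosSemidef.of_dotProduct_mulVec_nonneg ?_ (fun x => ?_)
        · show (ηw • (Aᵀ * A) - δ • 1)ᴴ = _
          rw [conjTranspose_sub, conjTranspose_smul, conjTranspose_smul, conjTranspose_one,
            hAtA.1]
          simp
        · obtain ⟨y, hy⟩ := hsurj x
          have h4 := hpsd2.dotProduct_mulVec_nonneg y
          rw [star_trivial] at h4 ⊢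
          rw [← hy]
          calc (0:ℝ) ≤ y ⬝ᵥ (A * (ηw • (Aᵀ * A) - δ • 1) * Aᵀ).mulVec y := h4
            _ = Aᵀ.mulVec y ⬝ᵥ (ηw • (Aᵀ * A) - δ • 1).mulVec (Aᵀ.mulVec y) := by
                rw [← Matrix.mulVec_mulVec, ← Matrix.mulVec_mulVec,
                  Matrix.dotProduct_mulVec y A, ← Matrix.mulVec_transpose]
      have hST : S = (ηw • (Aᵀ * A) - δ • 1) + (δ/2) • 1 := by
        rw [hSdef]; module
      rw [hST]
      exact hT.add (psd_smul' Matrix.PosSemidef.one (by linarith))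
  -- conclude via uniqueness of the PSD square root
  have hsqrt : S = hpsd.sqrt := eq_sqrt_of_sq_eq' hSpsd hpsd hSsq
  rw [← hsqrt, hSdef]
  have : (δ/2) • (1 : Matrix (Fin c) (Fin c) ℝ) + (ηw • (Aᵀ * A) - (δ/2) • 1)
      = ηw • (Aᵀ * A) := by module
  rw [this, smul_smul, one_div, inv_mul_cancel₀ hηw.ne', one_smul]
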